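/- If p is a polynomial with p(A) = 0 (e.g. the minimal polynomial of A), then the image of R₀(X) = d/dt|_{t=0} p(A + tX) is contained in the centralizer of A: [R₀(X), A] = 0 for all X. -/

import Mathlib

/-- `R₀(X) = d/dt|₀ p(A + tX)`, given by the explicit formula
`p(t) = tᵏ ↦ Σ_{j<k} A^(k-1-j) X A^j`, extended linearly in `p`. -/
noncomputable def R0 {V : Type*} [AddCommGroup V] [Module ℝ V]
    (p : Polynomial ℝ) (A X : Module.End ℝ V) : Module.End ℝ V :=
  p.sum fun k c => c • ∑ j ∈ Finset.range k, A ^ (k - 1 - j) * X * A ^ j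

lemma comm_S {V : Type*} [AddCommGroup V] [Module ℝ V]
    (A X : Module.End ℝ V) (k : ℕ) :
    (∑ j ∈ Finset.range k, A ^ (k - 1 - j) * X * A ^ j) * A -
      A * (∑ j ∈ Finset.range k, A ^ (k - 1 - j) * X * A ^ j) =
      X * A ^ k - A ^ k * X := by
  induction k with
  | zero => simp
  | succ k ih =>
    have hsplit : (∑ j ∈ Finset.range (k + 1), A ^ (k + 1 - 1 - j) * X * A ^ j) =
        A * (∑ j ∈ Finset.range k, A ^ (k - 1 - j) * X * A ^ j) + X * A ^ k := by
      rw [Finset.sum_range_succ, Finset.mul_sum]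
      congr 1
      · apply Finset.sum_congr rfl
        intro j hj
        have hj' : j < k := Finset.mem_range.mp hj
        have h1 : k + 1 - 1 - j = (k - 1 - j) + 1 := by omega
        rw [h1, pow_succ', mul_assoc, mul_assoc, mul_assoc]
      · simp
    rw [hsplit]
    have h2 : (A * (∑ j ∈ Finset.range k, A ^ (k - 1 - j) * X * A ^ j) + X * A ^ k) * A -
        A * (A * (∑ j ∈ Finset.range k, A ^ (k - 1 - j) * X * A ^ j) + X * A ^ k) =
        A * ((∑ j ∈ Finset.range k, A ^ (k - 1 - j) * X * A ^ j) * A -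
          A * (∑ j ∈ Finset.range k, A ^ (k - 1 - j) * X * A ^ j)) +
          (X * A ^ (k + 1) - A * (X * A ^ k)) := by
      noncomm_ring
    rw [h2, ih, mul_sub]
    have h3 : A * (A ^ k * X) = A ^ (k + 1) * X := by
      rw [← mul_assoc, ← pow_succ']
    rw [h3]
    abel

lemma commR {V : Type*} [AddCommGroup V] [Module ℝ V]
    (A X : Module.End ℝ V) (p : Polynomial ℝ) :
    ⁅R0 p A X, A⁆ = X * Polynomial.aeval A p - Polynomial.aeval A p * X := by
  induction p using Polynomial.induction_on' with
  | add p q hp hq =>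
    have : R0 (p + q) A X = R0 p A X + R0 q A X := by
      unfold R0
      apply Polynomial.sum_add_index
      · intro k; simp
      · intro k b c; rw [add_smul]
    rw [this, (show ⁅R0 p A X + R0 q A X, A⁆ = ⁅R0 p A X, A⁆ + ⁅R0 q A X, A⁆ by
      rw [Ring.lie_def, Ring.lie_def, Ring.lie_def]; noncomm_ring), hp, hq, map_add]
    noncomm_ring
  | monomial n c =>
    have : R0 (Polynomial.monomial n c) A X =
        c • ∑ j ∈ Finset.range n, A ^ (n - 1 - j) * X * A ^ j := by
      unfold R0
      exact Polynomial.sum_monomial_index c _ (by simp)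
    rw [this, Polynomial.aeval_monomial, (show ⁅c • ∑ j ∈ Finset.range n, A ^ (n - 1 - j) * X * A ^ j, A⁆ =
      c • ⁅∑ j ∈ Finset.range n, A ^ (n - 1 - j) * X * A ^ j, A⁆ by
      rw [Ring.lie_def, Ring.lie_def, smul_mul_assoc, mul_smul_comm, smul_sub]), Ring.lie_def, comm_S,
      ← Algebra.smul_def]
    rw [smul_sub, mul_smul_comm, smul_mul_assoc]

/-- If `p(A) = 0` then the image of `R₀` lies in the centralizer of `A`. -/
theorem stmt_10 {V : Type*} [AddCommGroup V] [Module ℝ V] [FiniteDimensional ℝ V]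
    (A : Module.End ℝ V) (p : Polynomial ℝ)
    (hp : Polynomial.aeval A p = 0) :
    ∀ X : Module.End ℝ V, ⁅R0 p A X, A⁆ = 0 := by
  intro X
  rw [commR, hp]
  simp
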